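/- Let I ⊆ R = MvPolynomial (Fin N) ℂ be an M-graded ideal, let J = Ideal.span {g_1, …, g_t} where each g_i is M-homogeneous, assume the grading is pointed, and let m ∈ M. Then D_0^m(I : J) = ∑_{i=1}^t D_0^m(I : g_i); explicitly, an M-homogeneous polynomial q of degree m satisfies λ_q(f) = 0 for all f ∈ I : J if and only if q = q_1 + ⋯ + q_t where each q_i is M-homogeneous of degree m and λ_{q_i} vanishes on the ideal quotient I : ⟨g_i⟩. -/

import Mathlib

open MvPolynomial

/-- The Macaulay pairing `λ_p(f) = ∑_α coeff(α,p) * coeff(α,f)`, as a linear functional. -/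
noncomputable def lam {N : ℕ} (p : MvPolynomial (Fin N) ℂ) :
    MvPolynomial (Fin N) ℂ →ₗ[ℂ] ℂ where
  toFun f := ∑ α ∈ p.support, coeff α p * coeff α f
  map_add' f g := by simp [mul_add, Finset.sum_add_distrib]
  map_smul' c f := by
    simp [MvPolynomial.coeff_smul, Finset.mul_sum, mul_left_comm]

/-- An ideal is `M`-graded if it is generated by a set of `M`-homogeneous polynomials. -/
def IsMGraded {N : ℕ} {M : Type*} [AddCommGroup M] (w : Fin N → M)
    (I : Ideal (MvPolynomial (Fin N) ℂ)) : Prop :=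
  ∃ S : Set (MvPolynomial (Fin N) ℂ),
    (∀ s ∈ S, ∃ m : M, s.IsWeightedHomogeneous w m) ∧ I = Ideal.span S

section Aux

variable {N : ℕ}

lemma lam_eq_sum {p f : MvPolynomial (Fin N) ℂ} {s : Finset (Fin N →₀ ℕ)}
    (hs : p.support ⊆ s) : lam p f = ∑ α ∈ s, coeff α p * coeff α f := by
  show ∑ α ∈ p.support, coeff α p * coeff α f = _
  refine Finset.sum_subset hs fun x _ hx => ?_
  rw [MvPolynomial.notMem_support_iff.mp hx, zero_mul]

lemma lam_add_left (p p' f : MvPolynomial (Fin N) ℂ) :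
    lam (p + p') f = lam p f + lam p' f := by
  classical
  rw [lam_eq_sum (s := p.support ∪ p'.support) (MvPolynomial.support_add),
    lam_eq_sum (s := p.support ∪ p'.support) Finset.subset_union_left,
    lam_eq_sum (s := p.support ∪ p'.support) Finset.subset_union_right,
    ← Finset.sum_add_distrib]
  simp [coeff_add, add_mul]

lemma lam_smul_left (c : ℂ) (p f : MvPolynomial (Fin N) ℂ) :
    lam (c • p) f = c * lam p f := by
  rw [lam_eq_sum (s := p.support) (MvPolynomial.support_smul)]
  show _ = c * ∑ α ∈ p.support, coeff α p * coeff α f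
  rw [Finset.mul_sum]
  refine Finset.sum_congr rfl fun α _ => ?_
  rw [MvPolynomial.coeff_smul, smul_eq_mul, mul_assoc]

lemma lam_monomial (p : MvPolynomial (Fin N) ℂ) (α : Fin N →₀ ℕ) :
    lam p (monomial α 1) = coeff α p := by
  classical
  show ∑ β ∈ p.support, coeff β p * coeff β (monomial α 1) = _
  rw [Finset.sum_eq_single α]
  · simp [coeff_monomial]
  · intro b _ hb
    rw [coeff_monomial, if_neg (fun h => hb h.symm), mul_zero]
  · intro h
    rw [MvPolynomial.notMem_support_iff.mp h, zero_mul]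

variable {M : Type*} [AddCommGroup M] {w : Fin N → M}

lemma lam_component {q : MvPolynomial (Fin N) ℂ} {m : M}
    (hq : q.IsWeightedHomogeneous w m) (f : MvPolynomial (Fin N) ℂ) :
    lam q (weightedHomogeneousComponent w m f) = lam q f := by
  classical
  show ∑ α ∈ q.support, _ = ∑ α ∈ q.support, _
  refine Finset.sum_congr rfl fun α hα => ?_
  rw [coeff_weightedHomogeneousComponent,
    if_pos (hq (MvPolynomial.mem_support_iff.mp hα))]

lemma component_mul_homogeneous {g : MvPolynomial (Fin N) ℂ} {d : M}
    (hg : g.IsWeightedHomogeneous w d) (f : MvPolynomial (Fin N) ℂ) (n : M) :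
    weightedHomogeneousComponent w n f * g
      = weightedHomogeneousComponent w (n + d) (f * g) := by
  classical
  ext α
  rw [coeff_mul, coeff_weightedHomogeneousComponent, coeff_mul]
  by_cases hα : (Finsupp.weight w) α = n + d
  · rw [if_pos hα]
    refine Finset.sum_congr rfl fun x hx => ?_
    rw [Finset.HasAntidiagonal.mem_antidiagonal] at hx
    by_cases hg2 : coeff x.2 g = 0
    · rw [hg2, mul_zero, mul_zero]
    · have hwx2 : (Finsupp.weight w) x.2 = d := hg hg2
      have : (Finsupp.weight w) x.1 = n := by
        have := map_add (Finsupp.weight w) x.1 x.2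
        rw [hx, hα, hwx2] at this
        exact add_right_cancel this.symm
      rw [coeff_weightedHomogeneousComponent, if_pos this]
  · rw [if_neg hα]
    refine Finset.sum_eq_zero fun x hx => ?_
    rw [Finset.HasAntidiagonal.mem_antidiagonal] at hx
    by_cases hg2 : coeff x.2 g = 0
    · rw [hg2, mul_zero]
    · have hwx2 : (Finsupp.weight w) x.2 = d := hg hg2
      rw [coeff_weightedHomogeneousComponent, if_neg, zero_mul]
      intro h1
      apply hα
      have := map_add (Finsupp.weight w) x.1 x.2
      rw [hx, h1, hwx2] at this
      exact this

end Aux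

/-- **Eq. (4.1)**: for a pointed `M`-grading, an `M`-graded ideal `I`, and
`J = ⟨g₁,…,g_t⟩` with each `g_i` `M`-homogeneous, `D_0^m(I : J) = ∑_i D_0^m(I : g_i)`:
an `M`-homogeneous `q` of degree `m` satisfies `λ_q(f) = 0` for all `f ∈ I : J` iff
`q = q₁ + ⋯ + q_t` where each `q_i` is `M`-homogeneous of degree `m` and `λ_{q_i}`
vanishes on `I : ⟨g_i⟩`. -/
theorem dualSpace_colon_ideal_sum {N t : ℕ} {M : Type*} [AddCommGroup M] (w : Fin N → M)
    (hpointed : ∀ m : M, {α : Fin N →₀ ℕ | Finsupp.weight w α = m}.Finite)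
    (I : Ideal (MvPolynomial (Fin N) ℂ)) (hI : IsMGraded w I)
    (g : Fin t → MvPolynomial (Fin N) ℂ)
    (hg : ∀ i, ∃ d : M, (g i).IsWeightedHomogeneous w d)
    (J : Ideal (MvPolynomial (Fin N) ℂ)) (hJ : J = Ideal.span (Set.range g))
    (m : M) (q : MvPolynomial (Fin N) ℂ) (hq : q.IsWeightedHomogeneous w m) :
    (∀ f ∈ I.colon J, lam q f = 0) ↔
      ∃ qs : Fin t → MvPolynomial (Fin N) ℂ, q = ∑ i, qs i ∧
        ∀ i, (qs i).IsWeightedHomogeneous w m ∧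
          ∀ f ∈ I.colon (Ideal.span {g i}), lam (qs i) f = 0 := by
  classical
  -- the ideal `I` is closed under taking weighted homogeneous components
  have hIcomp : ∀ f ∈ I, ∀ n : M, weightedHomogeneousComponent w n f ∈ I := by
    letI := weightedGradedAlgebra ℂ w
    obtain ⟨S, hS, rfl⟩ := hI
    have hhom : (Ideal.span S).IsHomogeneous (weightedHomogeneousSubmodule ℂ w) := by
      refine Ideal.homogeneous_span _ _ fun x hx => ?_
      obtain ⟨n, hn⟩ := hS x hx
      exact ⟨n, hn⟩
    intro f hf n
    have := hhom n hf
    rwa [← MvPolynomial.decompose'_apply ℂ w f n]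
  set K : Fin t → Ideal (MvPolynomial (Fin N) ℂ) := fun i => I.colon (Ideal.span {g i}) with hK
  have hKmem : ∀ i (f : MvPolynomial (Fin N) ℂ), f ∈ K i ↔ f * g i ∈ I := fun i f =>
    Ideal.mem_colon_span_singleton
  -- each `K i` is closed under taking the degree-`m` component
  have hKcomp : ∀ i, ∀ f ∈ K i, weightedHomogeneousComponent w m f ∈ K i := by
    intro i f hf
    obtain ⟨d, hd⟩ := hg i
    rw [hKmem, component_mul_homogeneous hd]
    exact hIcomp _ ((hKmem i f).mp hf) _
  -- membership of the colon ideal `I : J`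
  have hJmem : ∀ f : MvPolynomial (Fin N) ℂ, f ∈ I.colon J ↔ ∀ i, f ∈ K i := by
    intro f
    constructor
    · intro hf i
      rw [hKmem]
      exact Submodule.mem_colon.mp hf (g i)
        (hJ ▸ Ideal.subset_span (Set.mem_range_self i))
    · intro hf
      rw [Submodule.mem_colon, hJ]
      intro p hp
      refine Submodule.span_induction (fun x hx => ?_) (by simp) (fun x y _ _ hx hy => ?_)
        (fun a x _ hx => ?_) hp
      · obtain ⟨i, rfl⟩ := hx
        exact (hKmem i f).mp (hf i)
      · rw [smul_add]; exact I.add_mem hx hy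
      · rw [smul_comm]; exact I.smul_mem a hx
  -- the finite-dimensional space of homogeneous polynomials of degree `m`
  set V : Submodule ℂ (MvPolynomial (Fin N) ℂ) := weightedHomogeneousSubmodule ℂ w m with hV
  haveI : FiniteDimensional ℂ V := by
    have hle : V ≤ Submodule.span ℂ
        ((fun α => (monomial α (1 : ℂ))) '' {α | Finsupp.weight w α = m}) := by
      intro p hp
      rw [p.as_sum]
      refine Submodule.sum_mem _ fun α hα => ?_
      have h1 : (monomial α (1 : ℂ)) ∈
          (fun α => (monomial α (1 : ℂ))) '' {α | Finsupp.weight w α = m} :=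
        ⟨α, hp (MvPolynomial.mem_support_iff.mp hα), rfl⟩
      have : monomial α (coeff α p) = (coeff α p) • monomial α (1 : ℂ) := by
        rw [smul_monomial, smul_eq_mul, mul_one]
      rw [this]
      exact Submodule.smul_mem _ _ (Submodule.subset_span h1)
    haveI : FiniteDimensional ℂ (Submodule.span ℂ
        ((fun α => (monomial α (1 : ℂ))) '' {α | Finsupp.weight w α = m})) :=
      FiniteDimensional.span_of_finite ℂ ((hpointed m).image _)
    exact Submodule.finiteDimensional_of_le hle
  -- the pairing as a map into the dual of `V`
  set Φ : V →ₗ[ℂ] Module.Dual ℂ V :=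
    { toFun := fun p => (lam (p : MvPolynomial (Fin N) ℂ)).comp V.subtype
      map_add' := fun p p' => by
        ext f
        exact lam_add_left (p : MvPolynomial (Fin N) ℂ) (p' : MvPolynomial (Fin N) ℂ) (f : MvPolynomial (Fin N) ℂ)
      map_smul' := fun c p => by
        ext f
        exact lam_smul_left c (p : MvPolynomial (Fin N) ℂ) (f : MvPolynomial (Fin N) ℂ) } with hΦ
  have hΦapp : ∀ (p : V) (f : V), Φ p f = lam (p : MvPolynomial (Fin N) ℂ) (f : MvPolynomial (Fin N) ℂ) := fun _ _ => rfl
  have hΦinj : Function.Injective Φ := by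
    rw [injective_iff_map_eq_zero]
    intro p hp
    have hcoeff : ∀ α, coeff α (p : MvPolynomial (Fin N) ℂ) = 0 := by
      intro α
      by_cases h : coeff α (p : MvPolynomial (Fin N) ℂ) = 0
      · exact h
      · have hw : Finsupp.weight w α = m := p.2 h
        have hmon : (monomial α (1 : ℂ)) ∈ V :=
          isWeightedHomogeneous_monomial w α 1 hw
        have := congrFun (congrArg DFunLike.coe hp) ⟨monomial α 1, hmon⟩
        rw [hΦapp] at this
        rw [lam_monomial] at this
        exact absurd this h
    exact Subtype.ext (MvPolynomial.ext _ _ hcoeff)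
  have hΦsurj : Function.Surjective Φ := by
    have hdim : Module.finrank ℂ V = Module.finrank ℂ (Module.Dual ℂ V) :=
      (Subspace.dual_finrank_eq).symm
    intro ψ
    obtain ⟨x, hx⟩ := (Φ.linearEquivOfInjective hΦinj hdim).surjective ψ
    exact ⟨x, by rw [← LinearMap.linearEquivOfInjective_apply hΦinj hdim, hx]⟩
  -- the subspaces of `V` cut out by the `K i`
  set W : Fin t → Submodule ℂ V :=
    fun i => ((K i).restrictScalars ℂ).comap V.subtype with hW
  have hWmem : ∀ i (v : V), v ∈ W i ↔ (v : MvPolynomial (Fin N) ℂ) ∈ K i := fun i v => Iff.rfl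
  -- vanishing on `K i` corresponds to the dual annihilator of `W i`
  have hann : ∀ (i : Fin t) (p : V),
      (∀ f ∈ K i, lam (p : MvPolynomial (Fin N) ℂ) f = 0) ↔ Φ p ∈ (W i).dualAnnihilator := by
    intro i p
    rw [Submodule.mem_dualAnnihilator]
    constructor
    · intro h v hv
      rw [hΦapp]
      exact h _ ((hWmem i v).mp hv)
    · intro h f hf
      have h1 : lam (p : MvPolynomial (Fin N) ℂ) (weightedHomogeneousComponent w m f) = lam (p : MvPolynomial (Fin N) ℂ) f :=
        lam_component p.2 f
      have h2 : weightedHomogeneousComponent w m f ∈ K i := hKcomp i f hf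
      have h3 : weightedHomogeneousComponent w m f ∈ V :=
        weightedHomogeneousComponent_mem w f m
      have := h ⟨_, h3⟩ ((hWmem i ⟨_, h3⟩).mpr h2)
      rw [hΦapp] at this
      rw [← h1, this]
  constructor
  · -- forward direction
    intro h
    set qV : V := ⟨q, hq⟩ with hqV
    have hmem : Φ qV ∈ (⨅ i, W i).dualAnnihilator := by
      rw [Submodule.mem_dualAnnihilator]
      intro v hv
      rw [Submodule.mem_iInf] at hv
      rw [hΦapp]
      exact h _ ((hJmem (v : MvPolynomial (Fin N) ℂ)).mpr fun i => (hWmem i v).mp (hv i))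
    rw [Subspace.dualAnnihilator_iInf_eq] at hmem
    rw [Submodule.mem_iSup_iff_exists_finsupp] at hmem
    obtain ⟨ψ, hψmem, hψsum⟩ := hmem
    choose p hp using fun i => hΦsurj (ψ i)
    refine ⟨fun i => (p i : MvPolynomial (Fin N) ℂ), ?_, fun i => ⟨(p i).2, ?_⟩⟩
    · have hsum : Φ (∑ i, p i) = Φ qV := by
        rw [map_sum]
        rw [← hψsum, Finsupp.sum_fintype _ _ (fun i => rfl)]
        exact Finset.sum_congr rfl fun i _ => hp i
      have : (∑ i, p i) = qV := hΦinj hsum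
      calc q = (qV : MvPolynomial (Fin N) ℂ) := rfl
        _ = ((∑ i, p i : V) : MvPolynomial (Fin N) ℂ) := by rw [this]
        _ = ∑ i, ((p i : MvPolynomial (Fin N) ℂ)) := by
            rw [Submodule.coe_sum]
    · intro f hf
      exact (hann i (p i)).mpr (hp i ▸ hψmem i) f hf
  · -- backward direction
    rintro ⟨qs, rfl, hqs⟩ f hf
    have hsum : ∀ (s : Finset (Fin t)), lam (∑ i ∈ s, qs i) f = ∑ i ∈ s, lam (qs i) f := by
      intro s
      induction s using Finset.induction with
      | empty => simp [lam]
      | insert _ _ h ih =>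
        rw [Finset.sum_insert h, Finset.sum_insert h, lam_add_left, ih]
    rw [hsum]
    refine Finset.sum_eq_zero fun i _ => ?_
    exact (hqs i).2 f ((hJmem f).mp hf i)
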